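/- The fiber of the photon potential bundle is exactly the kernel of the momentum contraction: for $p = \kappa(\Lambda)p_0$ on the forward light cone ($\Lambda \in SL(2,\mathbb{C})$), the subspace $\Phi_e(\Lambda) R_e \leq \mathbb{C}^4$, where $R_e = \mathbb{C}p_0 \oplus \mathbb{C}\epsilon_+ \oplus \mathbb{C}\epsilon_-$, equals $\{ z \in \mathbb{C}^4 : p_\mu z^\mu = 0 \}$. -/

import Mathlib

/-! STATEMENT 11: For `p = κ(Λ)p₀` on the forward light cone
(`Λ ∈ SL(2,ℂ)`), the fiber `Φ_e(Λ)R_e` of the photon potential bundle,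
where `R_e = ℂp₀ ⊕ ℂε₊ ⊕ ℂε₋`, equals `{z ∈ ℂ⁴ : p_μ z^μ = 0}`. -/

open Matrix Complex

noncomputable section

def tildeC (x : Fin 4 → ℂ) : Matrix (Fin 2) (Fin 2) ℂ :=
  !![x 0 + x 3, x 1 - Complex.I * x 2; x 1 + Complex.I * x 2, x 0 - x 3]

def untildeC (M : Matrix (Fin 2) (Fin 2) ℂ) : Fin 4 → ℂ :=
  ![(M 0 0 + M 1 1) / 2, (M 1 0 + M 0 1) / 2,
    (M 1 0 - M 0 1) / (2 * Complex.I), (M 0 0 - M 1 1) / 2]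

/-- The complexified Lorentz action `Φ_e(A) = κ(A)` on `ℂ⁴`. -/
def PhiM (A : Matrix (Fin 2) (Fin 2) ℂ) (x : Fin 4 → ℂ) : Fin 4 → ℂ :=
  untildeC (A * tildeC x * Aᴴ)

/-- `κ(A)` on real four-vectors. -/
def kappaM (A : Matrix (Fin 2) (Fin 2) ℂ) (x : Fin 4 → ℝ) : Fin 4 → ℝ :=
  fun i => (PhiM A (fun j => (x j : ℂ)) i).re

def epsP : Fin 4 → ℂ := ![0, 1 / (Real.sqrt 2 : ℂ), Complex.I / (Real.sqrt 2 : ℂ), 0]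
def epsM : Fin 4 → ℂ := ![0, 1 / (Real.sqrt 2 : ℂ), -Complex.I / (Real.sqrt 2 : ℂ), 0]
def p0C : Fin 4 → ℂ := ![1, 0, 0, 1]
def p0R : Fin 4 → ℝ := ![1, 0, 0, 1]

/-- The Minkowski contraction `p_μ z^μ`, extended bilinearly to `ℂ⁴`. -/
def minkC (p z : Fin 4 → ℂ) : ℂ :=
  p 0 * z 0 - p 1 * z 1 - p 2 * z 2 - p 3 * z 3

lemma tilde_untilde (M : Matrix (Fin 2) (Fin 2) ℂ) : tildeC (untildeC M) = M := by
  have hI := Complex.I_ne_zero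
  ext i j
  fin_cases i <;> fin_cases j <;>
    simp only [tildeC, untildeC, Matrix.cons_val] <;>
    norm_num [Matrix.cons_val_zero, Matrix.cons_val_one, Matrix.head_cons] <;>
    (try field_simp) <;> (try ring)

lemma untilde_tilde (x : Fin 4 → ℂ) : untildeC (tildeC x) = x := by
  have hI := Complex.I_ne_zero
  funext i
  fin_cases i <;>
    simp only [tildeC, untildeC] <;>
    norm_num [Matrix.cons_val_zero, Matrix.cons_val_one, Matrix.head_cons] <;>
    (try field_simp) <;> (try ring) <;> rfl

lemma tildeC_add (x y : Fin 4 → ℂ) : tildeC (x + y) = tildeC x + tildeC y := by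
  ext i j
  fin_cases i <;> fin_cases j <;>
    simp [tildeC, Pi.add_apply] <;> ring

lemma untildeC_add (M N : Matrix (Fin 2) (Fin 2) ℂ) :
    untildeC (M + N) = untildeC M + untildeC N := by
  funext i
  fin_cases i <;> simp [untildeC, Pi.add_apply] <;> ring

lemma tildeC_smul (c : ℂ) (x : Fin 4 → ℂ) : tildeC (c • x) = c • tildeC x := by
  ext i j
  fin_cases i <;> fin_cases j <;>
    simp [tildeC, Pi.smul_apply, Matrix.smul_apply, smul_eq_mul] <;> ring

lemma untildeC_smul (c : ℂ) (M : Matrix (Fin 2) (Fin 2) ℂ) :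
    untildeC (c • M) = c • untildeC M := by
  funext i
  fin_cases i <;>
    simp [untildeC, Pi.smul_apply, Matrix.smul_apply, smul_eq_mul] <;> ring

lemma PhiM_add (A : Matrix (Fin 2) (Fin 2) ℂ) (x y : Fin 4 → ℂ) :
    PhiM A (x + y) = PhiM A x + PhiM A y := by
  simp only [PhiM, tildeC_add, Matrix.mul_add, Matrix.add_mul, untildeC_add]

lemma PhiM_smul (A : Matrix (Fin 2) (Fin 2) ℂ) (c : ℂ) (x : Fin 4 → ℂ) :
    PhiM A (c • x) = c • PhiM A x := by
  simp only [PhiM, tildeC_smul, Matrix.mul_smul, Matrix.smul_mul, untildeC_smul]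

lemma mink_self (x : Fin 4 → ℂ) : minkC x x = (tildeC x).det := by
  simp only [minkC, tildeC, Matrix.det_fin_two_of]
  linear_combination (-(x 2 * x 2)) * Complex.I_mul_I

lemma PhiM_comp (A B : Matrix (Fin 2) (Fin 2) ℂ) (x : Fin 4 → ℂ) :
    PhiM A (PhiM B x) = PhiM (A * B) x := by
  simp only [PhiM, tilde_untilde, Matrix.conjTranspose_mul, Matrix.mul_assoc]

lemma PhiM_one (x : Fin 4 → ℂ) : PhiM 1 x = x := by
  simp [PhiM, untilde_tilde]

lemma mink_inv (A : Matrix (Fin 2) (Fin 2) ℂ) (hA : A.det = 1) (x y : Fin 4 → ℂ) :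
    minkC (PhiM A x) (PhiM A y) = minkC x y := by
  have q : ∀ w : Fin 4 → ℂ, minkC (PhiM A w) (PhiM A w) = minkC w w := by
    intro w
    rw [mink_self, mink_self]
    have ht : tildeC (PhiM A w) = A * tildeC w * Aᴴ := tilde_untilde _
    rw [ht, Matrix.det_mul, Matrix.det_mul, Matrix.det_conjTranspose, hA]
    simp
  have expand : ∀ a b : Fin 4 → ℂ,
      minkC (a + b) (a + b) = minkC a a + minkC b b + 2 * minkC a b := by
    intro a b; simp only [minkC, Pi.add_apply]; ring
  have hxy := q (x + y)
  rw [PhiM_add, expand, expand] at hxy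
  linear_combination (hxy - q x - q y) / 2

lemma kappa_p0_real (A : Matrix (Fin 2) (Fin 2) ℂ) :
    (fun i => ((kappaM A p0R i : ℝ) : ℂ)) = PhiM A p0C := by
  have hcoe : (fun j => ((p0R j : ℝ) : ℂ)) = p0C := by
    funext j; fin_cases j <;> simp [p0R, p0C]
  funext i
  simp only [kappaM, hcoe]
  rw [Complex.conj_eq_iff_re.mp ?_]
  fin_cases i <;>
    simp only [PhiM, untildeC, tildeC, p0C, Matrix.mul_apply, Fin.sum_univ_succ,
      Fin.sum_univ_zero, Matrix.conjTranspose_apply, Matrix.cons_val', Matrix.cons_val_zero,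
      Matrix.cons_val_one, Matrix.head_cons, Matrix.empty_val', Matrix.cons_val_fin_one,
      Matrix.head_fin_const, Matrix.cons_val] <;>
    norm_num <;>
    simp only [map_div₀, map_add, map_sub, _root_.map_mul, map_ofNat, Complex.conj_I,
      Complex.conj_conj, RingHom.map_one, map_neg] <;>
    ring

theorem photon_potential_fiber (A : Matrix (Fin 2) (Fin 2) ℂ) (hA : A.det = 1) :
    (Submodule.span ℂ {PhiM A p0C, PhiM A epsP, PhiM A epsM} :
        Set (Fin 4 → ℂ)) =
      {z : Fin 4 → ℂ | minkC (fun i => ((kappaM A p0R i : ℝ) : ℂ)) z = 0} := by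
  rw [kappa_p0_real]
  ext z
  simp only [Set.mem_setOf_eq, SetLike.mem_coe]
  constructor
  · intro hz
    induction hz using Submodule.span_induction with
    | mem g hg =>
      rcases hg with hg | hg | hg <;> subst hg <;>
        rw [mink_inv A hA] <;> simp [minkC, p0C, epsP, epsM]
    | zero => simp [minkC]
    | add a b _ _ ha hb =>
      have : minkC (PhiM A p0C) (a + b) =
          minkC (PhiM A p0C) a + minkC (PhiM A p0C) b := by
        simp only [minkC, Pi.add_apply]; ring
      rw [this, ha, hb, add_zero]
    | smul c a _ ha =>
      have : minkC (PhiM A p0C) (c • a) = c * minkC (PhiM A p0C) a := by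
        simp only [minkC, Pi.smul_apply, smul_eq_mul]; ring
      rw [this, ha, mul_zero]
  · intro hz
    -- invert A
    set B : Matrix (Fin 2) (Fin 2) ℂ := !![A 1 1, -A 0 1; -A 1 0, A 0 0] with hB
    have hdet : A 0 0 * A 1 1 - A 0 1 * A 1 0 = 1 := by
      rw [Matrix.det_fin_two] at hA; exact hA
    have hAB : A * B = 1 := by
      rw [hB, ← Matrix.adjugate_fin_two, Matrix.mul_adjugate, hA, one_smul]
    set w : Fin 4 → ℂ := PhiM B z with hw
    have hzw : PhiM A w = z := by
      rw [hw, PhiM_comp, hAB, PhiM_one]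
    have hker : minkC p0C w = 0 := by
      rw [← mink_inv A hA p0C w, hzw]; exact hz
    have hw03 : w 0 = w 3 := by
      have : minkC p0C w = w 0 - w 3 := by simp [minkC, p0C]
      rw [this] at hker; exact sub_eq_zero.mp hker
    set s : ℂ := ((Real.sqrt 2 : ℝ) : ℂ) with hs
    have hs2 : s * s = 2 := by
      rw [hs, ← Complex.ofReal_mul, Real.mul_self_sqrt (by norm_num)]
      norm_num
    have hsne : s ≠ 0 := by
      intro h
      rw [h, zero_mul] at hs2
      norm_num at hs2
    have hwdecomp : w = (w 0) • p0C + ((w 1 - Complex.I * w 2) * s / 2) • epsP +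
        ((w 1 + Complex.I * w 2) * s / 2) • epsM := by
      funext i
      fin_cases i
      · simp [p0C, epsP, epsM]
      · simp only [Pi.add_apply, Pi.smul_apply, smul_eq_mul, p0C, epsP, epsM,
          Matrix.cons_val_zero, Matrix.cons_val_one, Matrix.head_cons, Fin.reduceFinMk, Matrix.cons_val]
        field_simp
        try ring
      · simp only [Pi.add_apply, Pi.smul_apply, smul_eq_mul, p0C, epsP, epsM,
          Matrix.cons_val_zero, Matrix.cons_val_one, Matrix.head_cons]
        field_simp
        simp only [Fin.reduceFinMk, Matrix.cons_val]
        linear_combination (2 * w 2 * ((Real.sqrt 2 : ℝ) : ℂ) * ((Real.sqrt 2 : ℝ) : ℂ)⁻¹) * Complex.I_mul_I - 2 * w 2 * (mul_inv_cancel₀ hsne : ((Real.sqrt 2 : ℝ) : ℂ) * ((Real.sqrt 2 : ℝ) : ℂ)⁻¹ = 1)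
      · simpa [p0C, epsP, epsM] using hw03.symm
    have hzdecomp : z = (w 0) • PhiM A p0C + ((w 1 - Complex.I * w 2) * s / 2) • PhiM A epsP +
        ((w 1 + Complex.I * w 2) * s / 2) • PhiM A epsM := by
      rw [← hzw]
      conv_lhs => rw [hwdecomp]
      rw [PhiM_add, PhiM_add, PhiM_smul, PhiM_smul, PhiM_smul]
    rw [hzdecomp]
    refine Submodule.add_mem _ (Submodule.add_mem _ ?_ ?_) ?_ <;>
      refine Submodule.smul_mem _ _ (Submodule.subset_span ?_) <;> simp
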